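/- Let q be a real polynomial of even degree 2r (r ≥ 1) with positive leading coefficient, and set w(x) = e^{−q(x)} on ℝ (a Freud weight). Let {pₙ}_{n∈ℤ₊} be the real polynomials orthonormal with respect to w(x)dx on ℝ, and define φₙ(x) = √(w(x)) pₙ(x) and D_{m,n} = ∫_ℝ φₘ′(x) φₙ(x) dx. Then the differentiation matrix is banded with bandwidth 2r−1: D_{m,n} = 0 whenever |m − n| ≥ 2r. -/

import Mathlib

open MeasureTheory

section FreudAux
open Polynomial Filter Set

lemma freud_tendsto_aux (A Q : Polynomial ℝ) (hQdeg : 2 ≤ Q.degree) (hQlead : 0 < Q.leadingCoeff) :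
    Tendsto (fun x => A.eval x * Real.exp (x - Q.eval x)) atTop (nhds 0) := by
  have h1 : Tendsto (fun x => A.eval x / Real.exp x) atTop (nhds 0) := A.tendsto_div_exp_atTop
  set R : Polynomial ℝ := Polynomial.C (-2) * Polynomial.X + Q with hR
  have hlt : (Polynomial.C (-2 : ℝ) * Polynomial.X).degree < Q.degree :=
    lt_of_le_of_lt (Polynomial.degree_C_mul_X_le _) (lt_of_lt_of_le (by norm_num) hQdeg)
  have hRdeg : R.degree = Q.degree := Polynomial.degree_add_eq_right_of_degree_lt hlt
  have hRlead : R.leadingCoeff = Q.leadingCoeff := Polynomial.leadingCoeff_add_of_degree_lt hlt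
  have h2 : Tendsto (fun x => R.eval x) atTop atTop :=
    R.tendsto_atTop_of_leadingCoeff_nonneg
      (by rw [hRdeg]; exact lt_of_lt_of_le (by norm_num) hQdeg) (hRlead ▸ hQlead.le)
  have h3 : Tendsto (fun x => Real.exp (-(R.eval x))) atTop (nhds 0) :=
    Real.tendsto_exp_atBot.comp ((Filter.tendsto_neg_atTop_atBot).comp h2)
  have h4 := h1.mul h3
  rw [zero_mul] at h4
  refine h4.congr fun x => ?_
  have hRx : R.eval x = -2 * x + Q.eval x := by simp [hR]
  rw [hRx, div_mul_eq_mul_div, div_eq_iff (Real.exp_ne_zero x), mul_assoc, ← Real.exp_add]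
  congr 2
  ring

lemma freud_comp_neg (r : ℕ) (hr : 1 ≤ r) (q : Polynomial ℝ)
    (hqdeg : q.degree = (2 * r : ℕ)) (hqlead : 0 < q.leadingCoeff) :
    (q.comp (-Polynomial.X)).degree = (2 * r : ℕ) ∧ 0 < (q.comp (-Polynomial.X)).leadingCoeff := by
  have hq0 : q ≠ 0 := Polynomial.leadingCoeff_ne_zero.mp hqlead.ne'
  have hnat : q.natDegree = 2 * r := Polynomial.natDegree_eq_of_degree_eq_some hqdeg
  have hXnat : (-Polynomial.X : Polynomial ℝ).natDegree = 1 := by simp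
  have hlc : (q.comp (-Polynomial.X)).leadingCoeff = q.leadingCoeff := by
    rw [Polynomial.leadingCoeff_comp (by rw [hXnat]; norm_num)]
    rw [Polynomial.leadingCoeff_neg, Polynomial.leadingCoeff_X, hnat]
    rw [pow_mul]
    norm_num
  have hpos : 0 < (q.comp (-Polynomial.X)).leadingCoeff := by rw [hlc]; exact hqlead
  have hne : q.comp (-Polynomial.X) ≠ 0 := Polynomial.leadingCoeff_ne_zero.mp hpos.ne'
  refine ⟨?_, hpos⟩
  rw [Polynomial.degree_eq_natDegree hne, Polynomial.natDegree_comp, hXnat, hnat, mul_one]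

lemma freud_bound (r : ℕ) (hr : 1 ≤ r) (q : Polynomial ℝ)
    (hqdeg : q.degree = (2 * r : ℕ)) (hqlead : 0 < q.leadingCoeff) (B : Polynomial ℝ) :
    ∃ C : ℝ, ∀ x : ℝ, |B.eval x * Real.exp (-q.eval x)| ≤ C * Real.exp (-|x|) := by
  have hdeg2 : 2 ≤ q.degree := by
    rw [hqdeg]; exact_mod_cast (by omega : 2 ≤ 2 * r)
  set F : ℝ → ℝ := fun x => B.eval x * Real.exp (|x| - q.eval x) with hF
  have hFcont : Continuous F :=
    (B.continuous_aeval.mul (Real.continuous_exp.comp (continuous_abs.sub q.continuous_aeval)))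
  have htop : Tendsto F atTop (nhds 0) := by
    refine (freud_tendsto_aux B q hdeg2 hqlead).congr' ?_
    filter_upwards [eventually_ge_atTop (0:ℝ)] with x hx
    rw [hF]; simp [abs_of_nonneg hx]
  have hbot : Tendsto F atBot (nhds 0) := by
    obtain ⟨hdc, hlc⟩ := freud_comp_neg r hr q hqdeg hqlead
    have hdc2 : 2 ≤ (q.comp (-Polynomial.X)).degree := by
      rw [hdc]; exact_mod_cast (by omega : 2 ≤ 2 * r)
    have hG : Tendsto (fun y => (B.comp (-Polynomial.X)).eval y *
        Real.exp (y - (q.comp (-Polynomial.X)).eval y)) atTop (nhds 0) :=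
      freud_tendsto_aux _ _ hdc2 hlc
    have hG' : Tendsto (fun y => F (-y)) atTop (nhds 0) := by
      refine hG.congr' ?_
      filter_upwards [eventually_ge_atTop (0:ℝ)] with y hy
      rw [hF]
      simp only [Polynomial.eval_comp, Polynomial.eval_neg, Polynomial.eval_X]
      rw [abs_of_nonpos (by linarith : (-y:ℝ) ≤ 0), neg_neg]
    have := hG'.comp Filter.tendsto_neg_atBot_atTop
    refine this.congr fun x => by simp
  have h0t : Tendsto (fun x => |F x|) atTop (nhds 0) := by simpa using htop.abs
  have h0b : Tendsto (fun x => |F x|) atBot (nhds 0) := by simpa using hbot.abs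
  obtain ⟨a, ha⟩ := eventually_atTop.mp (h0t.eventually (gt_mem_nhds one_pos))
  obtain ⟨b, hb⟩ := eventually_atBot.mp (h0b.eventually (gt_mem_nhds one_pos))
  obtain ⟨C0, hC0⟩ := (isCompact_Icc (a := b) (b := a)).exists_bound_of_continuousOn
    hFcont.continuousOn
  refine ⟨max C0 1, fun x => ?_⟩
  have key : |B.eval x * Real.exp (-q.eval x)| = |F x| * Real.exp (-|x|) := by
    rw [hF, abs_mul, abs_mul, Real.abs_exp, Real.abs_exp, mul_assoc, ← Real.exp_add]
    congr 2
    ring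
  have hb2 : |F x| ≤ max C0 1 := by
    rcases le_total a x with h | h
    · exact le_trans (ha x h).le (le_max_right _ _)
    rcases le_total x b with h' | h'
    · exact le_trans (hb x h').le (le_max_right _ _)
    · exact le_trans (by simpa [Real.norm_eq_abs] using hC0 x ⟨h', h⟩) (le_max_left _ _)
  rw [key]
  exact mul_le_mul_of_nonneg_right hb2 (Real.exp_pos _).le

lemma integrable_exp_neg_abs' : Integrable (fun x : ℝ => Real.exp (-|x|)) := by
  have hmeas : AEStronglyMeasurable (fun x : ℝ => Real.exp (-|x|)) volume :=
    (Real.continuous_exp.comp continuous_abs.neg).aestronglyMeasurable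
  rw [← integrableOn_univ, ← Set.Iic_union_Ioi (a := (0:ℝ))]
  apply IntegrableOn.union
  · refine (integrableOn_exp_Iic 0).congr_fun (fun x hx => ?_) measurableSet_Iic
    rw [abs_of_nonpos hx, neg_neg]
  · refine (exp_neg_integrableOn_Ioi 0 one_pos).congr_fun (fun x hx => ?_) measurableSet_Ioi
    beta_reduce
    rw [neg_one_mul, abs_of_pos hx]

lemma freud_integrable (r : ℕ) (hr : 1 ≤ r) (q : Polynomial ℝ)
    (hqdeg : q.degree = (2 * r : ℕ)) (hqlead : 0 < q.leadingCoeff) (B : Polynomial ℝ) :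
    Integrable (fun x : ℝ => B.eval x * Real.exp (-q.eval x)) := by
  obtain ⟨C, hC⟩ := freud_bound r hr q hqdeg hqlead B
  refine Integrable.mono' (integrable_exp_neg_abs'.const_mul C)
    ((B.continuous_aeval.mul (Real.continuous_exp.comp
      q.continuous_aeval.neg)).aestronglyMeasurable) ?_
  filter_upwards with x
  rw [Real.norm_eq_abs]
  exact hC x

lemma freud_tendsto_zero (r : ℕ) (hr : 1 ≤ r) (q : Polynomial ℝ)
    (hqdeg : q.degree = (2 * r : ℕ)) (hqlead : 0 < q.leadingCoeff) (B : Polynomial ℝ) :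
    Tendsto (fun x : ℝ => B.eval x * Real.exp (-q.eval x)) atTop (nhds 0) ∧
    Tendsto (fun x : ℝ => B.eval x * Real.exp (-q.eval x)) atBot (nhds 0) := by
  obtain ⟨C, hC⟩ := freud_bound r hr q hqdeg hqlead B
  have habs : ∀ x : ℝ, ‖B.eval x * Real.exp (-q.eval x)‖ ≤ C * Real.exp (-|x|) := by
    intro x; rw [Real.norm_eq_abs]; exact hC x
  constructor
  · refine squeeze_zero_norm habs ?_
    have : Tendsto (fun x : ℝ => Real.exp (-|x|)) atTop (nhds 0) :=
      Real.tendsto_exp_atBot.comp (Filter.tendsto_neg_atTop_atBot.comp tendsto_abs_atTop_atTop)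
    simpa using this.const_mul C
  · refine squeeze_zero_norm habs ?_
    have : Tendsto (fun x : ℝ => Real.exp (-|x|)) atBot (nhds 0) :=
      Real.tendsto_exp_atBot.comp (Filter.tendsto_neg_atTop_atBot.comp tendsto_abs_atBot_atTop)
    simpa using this.const_mul C

lemma freud_ftc (r : ℕ) (hr : 1 ≤ r) (q : Polynomial ℝ)
    (hqdeg : q.degree = (2 * r : ℕ)) (hqlead : 0 < q.leadingCoeff) (A : Polynomial ℝ) :
    ∫ x : ℝ, (A.derivative - q.derivative * A).eval x * Real.exp (-q.eval x) = 0 := by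
  have hderiv : ∀ x : ℝ, HasDerivAt (fun y : ℝ => A.eval y * Real.exp (-q.eval y))
      ((A.derivative - q.derivative * A).eval x * Real.exp (-q.eval x)) x := by
    intro x
    have h := (A.hasDerivAt x).mul (((q.hasDerivAt x).neg).exp)
    refine h.congr_deriv ?_
    simp only [Pi.neg_apply, Polynomial.eval_sub, Polynomial.eval_mul]
    ring
  have hint := freud_integrable r hr q hqdeg hqlead (A.derivative - q.derivative * A)
  have htend := freud_tendsto_zero r hr q hqdeg hqlead A
  have := integral_of_hasDerivAt_of_tendsto hderiv hint htend.2 htend.1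
  simpa using this

lemma freud_orth_ext (r : ℕ) (hr : 1 ≤ r) (q : Polynomial ℝ)
    (hqdeg : q.degree = (2 * r : ℕ)) (hqlead : 0 < q.leadingCoeff)
    (p : ℕ → Polynomial ℝ) (hpdeg : ∀ n, (p n).degree = n)
    (horth : ∀ m n : ℕ,
      ∫ x : ℝ, (p m).eval x * (p n).eval x * Real.exp (-q.eval x) = if m = n then 1 else 0) :
    ∀ (P : Polynomial ℝ) (n : ℕ), P.degree < (n : ℕ) →
      ∫ x : ℝ, (P * p n).eval x * Real.exp (-q.eval x) = 0 := by
  suffices H : ∀ (k : ℕ) (P : Polynomial ℝ), P.natDegree < k → ∀ n : ℕ, P.degree < (n : ℕ) →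
      ∫ x : ℝ, (P * p n).eval x * Real.exp (-q.eval x) = 0 by
    intro P n h
    exact H (P.natDegree + 1) P (Nat.lt_succ_self _) n h
  intro k
  induction k with
  | zero => intro P h; exact absurd h (Nat.not_lt_zero _)
  | succ k ih =>
    intro P hk n hdeg
    by_cases hP : P = 0
    · simp [hP]
    set j := P.natDegree with hj
    have hdegP : P.degree = (j : ℕ) := Polynomial.degree_eq_natDegree hP
    have hjn : j < n := by
      rw [hdegP] at hdeg
      exact_mod_cast hdeg
    have hpj0 : p j ≠ 0 := by
      intro h
      have := hpdeg j
      rw [h, Polynomial.degree_zero] at this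
      simp at this
    have hlcj : (p j).leadingCoeff ≠ 0 := Polynomial.leadingCoeff_ne_zero.mpr hpj0
    set c : ℝ := P.leadingCoeff / (p j).leadingCoeff with hc
    have hc0 : c ≠ 0 := div_ne_zero (Polynomial.leadingCoeff_ne_zero.mpr hP) hlcj
    have hcmul : c * (p j).leadingCoeff = P.leadingCoeff := div_mul_cancel₀ _ hlcj
    set R : Polynomial ℝ := P - Polynomial.C c * p j with hRdef
    have hdegCc : (Polynomial.C c * p j).degree = (j : ℕ) := by
      rw [Polynomial.degree_mul, Polynomial.degree_C hc0, hpdeg j, zero_add]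
    have hRlt : R.degree < P.degree := by
      refine Polynomial.degree_sub_lt ?_ hP ?_
      · rw [hdegCc, hdegP]
      · rw [Polynomial.leadingCoeff_mul, Polynomial.leadingCoeff_C, hcmul]
    have hsplit : P = Polynomial.C c * p j + R := by rw [hRdef]; ring
    have hRn : R.degree < (n : ℕ) := lt_trans hRlt hdeg
    have e1 : ∀ x : ℝ, (P * p n).eval x * Real.exp (-q.eval x) =
        c * ((p j * p n).eval x * Real.exp (-q.eval x)) +
        (R * p n).eval x * Real.exp (-q.eval x) := by
      intro x
      conv_lhs => rw [hsplit]
      simp only [Polynomial.eval_add, Polynomial.eval_mul, Polynomial.eval_C]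
      ring
    have int1 := freud_integrable r hr q hqdeg hqlead (p j * p n)
    have int2 := freud_integrable r hr q hqdeg hqlead (R * p n)
    have hRint : ∫ x : ℝ, (R * p n).eval x * Real.exp (-q.eval x) = 0 := by
      by_cases hR0 : R = 0
      · simp [hR0]
      have : R.natDegree < k := by
        have h1 : R.natDegree < P.natDegree := by
          apply Polynomial.natDegree_lt_natDegree hR0
          exact hRlt
        omega
      exact ih R this n hRn
    have hjint : ∫ x : ℝ, (p j * p n).eval x * Real.exp (-q.eval x) = 0 := by
      have := horth j n
      rw [if_neg hjn.ne] at this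
      rw [← this]
      congr 1
      funext x
      simp [Polynomial.eval_mul, mul_assoc]
    calc ∫ x : ℝ, (P * p n).eval x * Real.exp (-q.eval x)
        = ∫ x : ℝ, (c * ((p j * p n).eval x * Real.exp (-q.eval x)) +
            (R * p n).eval x * Real.exp (-q.eval x)) := by
          simp only [e1]
      _ = c * (∫ x : ℝ, (p j * p n).eval x * Real.exp (-q.eval x)) +
            ∫ x : ℝ, (R * p n).eval x * Real.exp (-q.eval x) := by
          rw [integral_add (int1.const_mul c) int2, MeasureTheory.integral_const_mul]
      _ = 0 := by rw [hjint, hRint]; ring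

lemma freud_Tdeg (r : ℕ) (hr : 1 ≤ r) (q : Polynomial ℝ) (hqdeg : q.degree = (2 * r : ℕ))
    (P : Polynomial ℝ) (a : ℕ) (hP : P.degree = (a : ℕ)) (b : ℕ) (hab : a + 2 * r ≤ b) :
    ((2:ℝ) • P.derivative - q.derivative * P).degree < (b : ℕ) := by
  have hP0 : P ≠ 0 := fun h => by
    rw [h, Polynomial.degree_zero] at hP
    exact absurd hP.symm (by simp)
  have h1 : ((2:ℝ) • P.derivative).degree < (b : ℕ) := by
    refine lt_of_le_of_lt (Polynomial.degree_smul_le _ _) ?_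
    refine lt_of_lt_of_le (lt_of_lt_of_le (Polynomial.degree_derivative_lt hP0) (le_of_eq hP)) ?_
    exact_mod_cast (by omega : a ≤ b)
  have h2 : (q.derivative * P).degree < (b : ℕ) := by
    refine lt_of_le_of_lt (Polynomial.degree_mul_le _ _) ?_
    have hq' : q.derivative.degree ≤ ((2 * r - 1 : ℕ) : WithBot ℕ) := by
      refine le_trans Polynomial.degree_le_natDegree ?_
      have := Polynomial.natDegree_derivative_le q
      rw [Polynomial.natDegree_eq_of_degree_eq_some hqdeg] at this
      exact_mod_cast this
    refine lt_of_le_of_lt (add_le_add hq' (le_of_eq hP)) ?_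
    rw [← Nat.cast_add]
    exact_mod_cast (by omega : 2 * r - 1 + a < b)
  exact lt_of_le_of_lt (Polynomial.degree_sub_le _ _) (max_lt h1 h2)

end FreudAux

/-- The W-system function `φ(x) = √(w(x)) p(x)` attached to a weight `w` and a polynomial. -/
noncomputable def wSysFun (w : ℝ → ℝ) (p : Polynomial ℝ) (x : ℝ) : ℝ :=
  Real.sqrt (w x) * p.eval x

/-- for the Freud weight `w = e^{−q}` with `q` a polynomial of even degree
`2r` (`r ≥ 1`) with positive leading coefficient, the differentiation matrix of the
associated W-system `φₙ = √w pₙ` is banded: `D_{m,n} = ∫_ℝ φₘ′ φₙ = 0` whenever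
`|m − n| ≥ 2r`. -/
theorem freud_weight_differentiationMatrix_banded
    (r : ℕ) (hr : 1 ≤ r) (q : Polynomial ℝ)
    (hqdeg : q.degree = (2 * r : ℕ)) (hqlead : 0 < q.leadingCoeff)
    (p : ℕ → Polynomial ℝ) (hpdeg : ∀ n, (p n).degree = n)
    (horth : ∀ m n : ℕ,
      ∫ x : ℝ, (p m).eval x * (p n).eval x * Real.exp (-q.eval x) = if m = n then 1 else 0) :
    ∀ m n : ℕ, (2 * r : ℤ) ≤ |(m : ℤ) - (n : ℤ)| →
      ∫ x : ℝ, deriv (wSysFun (fun y => Real.exp (-q.eval y)) (p m)) x *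
          wSysFun (fun y => Real.exp (-q.eval y)) (p n) x = 0 := by
  intro m n hmn
  have hφ : ∀ P : Polynomial ℝ, wSysFun (fun y => Real.exp (-q.eval y)) P
      = fun x => Real.exp (-q.eval x / 2) * P.eval x := by
    intro P; funext x
    show Real.sqrt (Real.exp (-q.eval x)) * P.eval x = _
    rw [← Real.exp_half]
  have hderiv : ∀ (P : Polynomial ℝ) (x : ℝ),
      HasDerivAt (wSysFun (fun y => Real.exp (-q.eval y)) P)
      (Real.exp (-q.eval x / 2) * (P.derivative.eval x - q.derivative.eval x / 2 * P.eval x))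
      x := by
    intro P x
    rw [hφ P]
    have h1 : HasDerivAt (fun y : ℝ => -q.eval y / 2) (-q.derivative.eval x / 2) x :=
      ((q.hasDerivAt x).neg).div_const 2
    have h2 := (h1.exp).mul (P.hasDerivAt x)
    refine h2.congr_deriv ?_
    ring
  set T : Polynomial ℝ := (2:ℝ) • (p m).derivative - q.derivative * (p m) with hT
  have hmain : (∫ x : ℝ, deriv (wSysFun (fun y => Real.exp (-q.eval y)) (p m)) x *
          wSysFun (fun y => Real.exp (-q.eval y)) (p n) x)
      = (1/2) * ∫ x : ℝ, (T * p n).eval x * Real.exp (-q.eval x) := by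
    rw [← MeasureTheory.integral_const_mul]
    congr 1; funext x
    rw [(hderiv (p m) x).deriv]
    simp only [hφ]
    have he : Real.exp (-q.eval x / 2) * Real.exp (-q.eval x / 2) = Real.exp (-q.eval x) := by
      rw [← Real.exp_add]; ring_nf
    simp only [hT, Polynomial.eval_mul, Polynomial.eval_sub, Polynomial.eval_smul, smul_eq_mul]
    linear_combination ((p m).derivative.eval x * (p n).eval x
      - q.derivative.eval x * (p m).eval x * (p n).eval x / 2) * he
  have hcase : m + 2 * r ≤ n ∨ n + 2 * r ≤ m := by
    rcases abs_cases ((m:ℤ) - (n:ℤ)) with ⟨h1, h2⟩ | ⟨h1, h2⟩ <;> rw [h1] at hmn <;> omega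
  rcases hcase with hc | hc
  · rw [hmain, freud_orth_ext r hr q hqdeg hqlead p hpdeg horth T n
      (freud_Tdeg r hr q hqdeg (p m) m (hpdeg m) n hc), mul_zero]
  · set T' : Polynomial ℝ := (2:ℝ) • (p n).derivative - q.derivative * (p n) with hT'
    set Bq : Polynomial ℝ := (p m * p n).derivative - q.derivative * (p m * p n) with hB
    have hid : T * p n = (2:ℝ) • Bq - T' * p m := by
      rw [hT, hT', hB, Polynomial.derivative_mul]
      simp only [Polynomial.smul_eq_C_mul, map_ofNat]
      ring
    have e2 : ∀ x : ℝ, (T * p n).eval x * Real.exp (-q.eval x) =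
        2 * (Bq.eval x * Real.exp (-q.eval x)) - (T' * p m).eval x * Real.exp (-q.eval x) := by
      intro x
      rw [hid]
      simp only [Polynomial.eval_sub, Polynomial.eval_mul, Polynomial.eval_smul, smul_eq_mul]
      ring
    have intB := freud_integrable r hr q hqdeg hqlead Bq
    have intT' := freud_integrable r hr q hqdeg hqlead (T' * p m)
    have hsplit2 : ∫ x : ℝ, (T * p n).eval x * Real.exp (-q.eval x)
        = 2 * (∫ x : ℝ, Bq.eval x * Real.exp (-q.eval x))
          - ∫ x : ℝ, (T' * p m).eval x * Real.exp (-q.eval x) := by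
      simp only [e2]
      rw [integral_sub (intB.const_mul 2) intT', MeasureTheory.integral_const_mul]
    have hftc : ∫ x : ℝ, Bq.eval x * Real.exp (-q.eval x) = 0 := by
      rw [hB]
      exact freud_ftc r hr q hqdeg hqlead (p m * p n)
    have horthT' : ∫ x : ℝ, (T' * p m).eval x * Real.exp (-q.eval x) = 0 :=
      freud_orth_ext r hr q hqdeg hqlead p hpdeg horth T' m
        (freud_Tdeg r hr q hqdeg (p n) n (hpdeg n) m hc)
    rw [hmain, hsplit2, hftc, horthT']
    ring
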